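/- Let A ⊆ B be an extension of differential integral domains of characteristic zero with B integral over A. Then the inclusion has the going-up property for prime differential ideals: if 𝔭₁ ⊆ 𝔭₂ are prime differential ideals of A and 𝔮₁ is a prime differential ideal of B with 𝔮₁ ∩ A = 𝔭₁, then there is a prime differential ideal 𝔮₂ ⊇ 𝔮₁ of B with 𝔮₂ ∩ A = 𝔭₂. -/

import Mathlib

/-- A derivation on a commutative ring, as a predicate. -/
def IsDerivationFn {R : Type*} [CommRing R] (d : R → R) : Prop :=
  (∀ a b : R, d (a + b) = d a + d b) ∧ (∀ a b : R, d (a * b) = a * d b + d a * b)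

/-- A differential ideal: an ideal stable under the derivation. -/
def IsDiffIdeal {R : Type*} [CommRing R] (d : R → R) (I : Ideal R) : Prop :=
  ∀ x ∈ I, d x ∈ I

/-- A Keigher ring: the radical of every differential ideal is differential. -/
def IsKeigher {R : Type*} [CommRing R] (d : R → R) : Prop :=
  IsDerivationFn d ∧ ∀ I : Ideal R, IsDiffIdeal d I → IsDiffIdeal d I.radical

section Aux

variable {R : Type*} [CommRing R]

lemma derivFn_zero {d : R → R} (hd : IsDerivationFn d) : d 0 = 0 := by
  have := hd.1 0 0
  simpa using this

lemma derivFn_pow {d : R → R} (hd : IsDerivationFn d) (x : R) :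
    ∀ n : ℕ, d (x ^ (n + 1)) = ((n + 1 : ℕ) : R) * x ^ n * d x := by
  intro n
  induction n with
  | zero => simp [pow_one]
  | succ m ih =>
    have : x ^ (m + 2) = x * x ^ (m + 1) := by ring
    rw [this, hd.2, ih]
    push_cast
    ring

/-- Division by a nonzero natural in an ideal of a ℚ-algebra. -/
lemma nat_mul_mem {R : Type*} [CommRing R] [Algebra ℚ R] (I : Ideal R) (n : ℕ)
    (hn : n ≠ 0) (y : R) (h : (n : R) * y ∈ I) : y ∈ I := by
  have hy : y = algebraMap ℚ R ((n : ℚ)⁻¹) * ((n : R) * y) := by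
    rw [← mul_assoc, ← map_natCast (algebraMap ℚ R) n, ← map_mul,
      inv_mul_cancel₀ (by exact_mod_cast hn), map_one, one_mul]
  rw [hy]
  exact I.mul_mem_left _ h

/-- Keigher's lemma in characteristic zero: the radical of a differential ideal
is differential. -/
lemma radical_diff {R : Type*} [CommRing R] [Algebra ℚ R] {d : R → R}
    (hd : IsDerivationFn d) (I : Ideal R) (hI : IsDiffIdeal d I) :
    IsDiffIdeal d I.radical := by
  intro x hx
  obtain ⟨n, hn⟩ := hx
  rcases n with - | m
  · -- n = 0 : then 1 ∈ I, I = ⊤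
    simp only [pow_zero] at hn
    have : I = ⊤ := (Ideal.eq_top_iff_one I).mpr hn
    subst this
    simp [Ideal.radical_top]
  -- claim : ∀ k ≤ m, x ^ (m - k) * d x ^ (2*k+1) ∈ I
  have claim : ∀ k : ℕ, k ≤ m → x ^ (m - k) * d x ^ (2 * k + 1) ∈ I := by
    intro k
    induction k with
    | zero =>
      intro _
      have h1 : d (x ^ (m + 1)) ∈ I := hI _ hn
      rw [derivFn_pow hd] at h1
      have h2 : ((m + 1 : ℕ) : R) * (x ^ m * d x) ∈ I := by
        rwa [← mul_assoc]
      have := nat_mul_mem I (m + 1) (Nat.succ_ne_zero m) _ h2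
      simpa using this
    | succ k ih =>
      intro hk1
      have hk : k ≤ m := Nat.le_of_succ_le hk1
      have hy := ih hk
      set s := m - (k + 1) with hs
      have hms : m - k = s + 1 := by omega
      rw [hms] at hy
      set y := x ^ (s + 1) * d x ^ (2 * k + 1) with hydef
      have hdy : d y ∈ I := hI _ hy
      have e1 : d y = x ^ (s + 1) * d (d x ^ (2 * k + 1)) +
          d (x ^ (s + 1)) * d x ^ (2 * k + 1) := hd.2 _ _
      have e2 : d (x ^ (s + 1)) = ((s + 1 : ℕ) : R) * x ^ s * d x := derivFn_pow hd x s
      have e3 : d (d x ^ (2 * k + 1)) = ((2 * k + 1 : ℕ) : R) * d x ^ (2 * k) * d (d x) := by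
        exact derivFn_pow hd (d x) (2 * k)
      have key : ((s + 1 : ℕ) : R) * (x ^ s * d x ^ (2 * (k + 1) + 1)) =
          d y * d x - ((2 * k + 1 : ℕ) : R) * d (d x) * y := by
        rw [e1, e2, e3, hydef]
        push_cast
        ring
      have hmem : ((s + 1 : ℕ) : R) * (x ^ s * d x ^ (2 * (k + 1) + 1)) ∈ I := by
        rw [key]
        exact I.sub_mem (I.mul_mem_right _ hdy) (I.mul_mem_left _ hy)
      exact nat_mul_mem I (s + 1) (Nat.succ_ne_zero s) _ hmem
  have := claim m le_rfl
  rw [Nat.sub_self, pow_zero, one_mul] at this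
  exact ⟨2 * m + 1, this⟩

/-- In a radical differential ideal, `a*b ∈ I` implies `a * d b ∈ I`. -/
lemma mul_deriv_mem {d : R → R} (hd : IsDerivationFn d) (I : Ideal R)
    (hrad : I.radical = I) (hI : IsDiffIdeal d I) {a b : R} (hab : a * b ∈ I) :
    a * d b ∈ I := by
  have h1 : d (a * b) ∈ I := hI _ hab
  rw [hd.2] at h1
  have h2 : (a * d b) ^ 2 = a * d b * (a * d b + d a * b) - (a * b) * (d a * d b) := by
    ring
  have h3 : (a * d b) ^ 2 ∈ I := by
    rw [h2]
    exact I.sub_mem (I.mul_mem_left _ h1) (I.mul_mem_right _ hab)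
  have : a * d b ∈ I.radical := ⟨2, h3⟩
  rwa [hrad] at this

/-- Saturation property: if `p` is a minimal prime over `I`, every `x ∈ p` has
`s * x ^ n ∈ I` for some `s ∉ p`. -/
lemma exists_mul_pow_mem_of_mem_minimalPrimes {I p : Ideal R}
    (hp : p ∈ I.minimalPrimes) {x : R} (hx : x ∈ p) :
    ∃ s ∉ p, ∃ n : ℕ, s * x ^ n ∈ I := by
  by_contra h
  push_neg at h
  haveI hpprime : p.IsPrime := hp.1.1
  set T : Submonoid R := Submonoid.closure ({x} ∪ {s : R | s ∉ p}) with hT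
  have hform : ∀ t ∈ T, ∃ s ∉ p, ∃ n : ℕ, t = s * x ^ n := by
    intro t ht
    induction ht using Submonoid.closure_induction with
    | mem y hy =>
      rcases hy with hy | hy
      · exact ⟨1, hpprime.ne_top ∘ (Ideal.eq_top_iff_one p).mpr, 1, by simp [Set.mem_singleton_iff.mp hy]⟩
      · exact ⟨y, hy, 0, by simp⟩
    | one => exact ⟨1, hpprime.ne_top ∘ (Ideal.eq_top_iff_one p).mpr, 0, by simp⟩
    | mul a b _ _ iha ihb =>
      obtain ⟨s₁, hs₁, n₁, rfl⟩ := iha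
      obtain ⟨s₂, hs₂, n₂, rfl⟩ := ihb
      exact ⟨s₁ * s₂, fun hm => ((hpprime.mem_or_mem hm).elim hs₁ hs₂),
        n₁ + n₂, by ring⟩
  have hdisj : Disjoint (I : Set R) (T : Set R) := by
    rw [Set.disjoint_left]
    intro t htI htT
    obtain ⟨s, hs, n, rfl⟩ := hform t htT
    exact h s hs n htI
  obtain ⟨q, hqprime, hIq, hqdisj⟩ := Ideal.exists_le_prime_disjoint I T hdisj
  have hqp : q ≤ p := by
    intro y hy
    by_contra hyp
    exact Set.disjoint_left.mp hqdisj hy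
      (Submonoid.subset_closure (Or.inr hyp))
  have hpq : p ≤ q := hp.2 ⟨hqprime, hIq⟩ hqp
  have hxT : x ∈ T := Submonoid.subset_closure (Or.inl rfl)
  exact Set.disjoint_left.mp hqdisj (hpq hx) hxT

/-- Minimal primes over a radical differential ideal are differential. -/
lemma minimalPrime_diff {R : Type*} [CommRing R] [Algebra ℚ R] {d : R → R}
    (hd : IsDerivationFn d) {I p : Ideal R} (hrad : I.radical = I)
    (hI : IsDiffIdeal d I) (hp : p ∈ I.minimalPrimes) : IsDiffIdeal d p := by
  intro x hx
  haveI hpprime : p.IsPrime := hp.1.1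
  obtain ⟨s, hs, n, hsx⟩ := exists_mul_pow_mem_of_mem_minimalPrimes hp hx
  -- s * x ∈ I since I is radical
  have hsx1 : s * x ∈ I := by
    have hpow : (s * x) ^ (n + 1) ∈ I := by
      have : (s * x) ^ (n + 1) = (s * x ^ n) * (s ^ n * x) := by ring
      rw [this]
      exact I.mul_mem_right _ hsx
    have : s * x ∈ I.radical := ⟨n + 1, hpow⟩
    rwa [hrad] at this
  have := mul_deriv_mem hd I hrad hI hsx1
  have hmem : s * d x ∈ p := hp.1.2 this
  exact (hpprime.mem_or_mem hmem).resolve_left hs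

end Aux

/-- going-up for prime differential ideals along integral extensions of
characteristic-zero differential domains. -/
theorem going_up_diff_integral
    {A B : Type*} [CommRing A] [CommRing B] [IsDomain A] [IsDomain B]
    [Algebra ℚ A] [Algebra ℚ B] [Algebra A B] [Algebra.IsIntegral A B]
    (hinj : Function.Injective (algebraMap A B))
    (dA : A → A) (dB : B → B) (hdA : IsDerivationFn dA) (hdB : IsDerivationFn dB)
    (hcompat : ∀ a : A, algebraMap A B (dA a) = dB (algebraMap A B a))
    (𝔭₁ 𝔭₂ : Ideal A) (h₁ : 𝔭₁.IsPrime) (h₂ : 𝔭₂.IsPrime) (h₁₂ : 𝔭₁ ≤ 𝔭₂)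
    (h₁d : IsDiffIdeal dA 𝔭₁) (h₂d : IsDiffIdeal dA 𝔭₂)
    (𝔮₁ : Ideal B) (hq₁ : 𝔮₁.IsPrime) (hq₁d : IsDiffIdeal dB 𝔮₁)
    (hover : Ideal.comap (algebraMap A B) 𝔮₁ = 𝔭₁) :
    ∃ 𝔮₂ : Ideal B, 𝔮₂.IsPrime ∧ IsDiffIdeal dB 𝔮₂ ∧ 𝔮₁ ≤ 𝔮₂ ∧
      Ideal.comap (algebraMap A B) 𝔮₂ = 𝔭₂ := by
  set f := algebraMap A B with hf
  -- the extension of 𝔭₂ to B is a differential ideal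
  have hmapd : IsDiffIdeal dB (Ideal.map f 𝔭₂) := by
    intro x hx
    rw [Ideal.map] at hx ⊢
    refine Submodule.span_induction (p := fun x _ => dB x ∈ Ideal.span (f '' (𝔭₂ : Set A)))
      ?_ ?_ ?_ ?_ hx
    · rintro y ⟨a, ha, rfl⟩
      rw [← hcompat]
      exact Ideal.subset_span ⟨dA a, h₂d a ha, rfl⟩
    · show dB 0 ∈ Ideal.span (f '' (𝔭₂ : Set A))
      rw [derivFn_zero hdB]
      exact Ideal.zero_mem _
    · intro y z _ _ hy hz
      rw [hdB.1]
      exact Ideal.add_mem _ hy hz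
    · intro r y hymem hy
      have : r • y = r * y := rfl
      rw [this, hdB.2]
      exact Ideal.add_mem _ (Ideal.mul_mem_left _ _ hy) (Ideal.mul_mem_left _ _ hymem)
  -- J := 𝔮₁ ⊔ 𝔭₂B is differential
  set J : Ideal B := 𝔮₁ ⊔ Ideal.map f 𝔭₂ with hJ
  have hJd : IsDiffIdeal dB J := by
    intro x hx
    rw [hJ, Submodule.mem_sup] at hx
    obtain ⟨y, hy, z, hz, rfl⟩ := hx
    rw [hdB.1]
    exact Ideal.add_mem _ (Ideal.mem_sup_left (hq₁d y hy)) (Ideal.mem_sup_right (hmapd z hz))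
  have hJradd : IsDiffIdeal dB J.radical := radical_diff hdB J hJd
  -- going-up for primes: get 𝔮 ⊇ 𝔮₁ prime lying over 𝔭₂
  haveI : 𝔭₂.IsPrime := h₂
  haveI : 𝔮₁.IsPrime := hq₁
  obtain ⟨𝔮, hq₁le, hqprime, hqcomap⟩ :=
    Ideal.exists_ideal_over_prime_of_isIntegral 𝔭₂ 𝔮₁ (by rw [hover]; exact h₁₂)
  haveI : 𝔮.IsPrime := hqprime
  -- J ≤ 𝔮, hence √J ≤ 𝔮
  have hJle : J ≤ 𝔮 := by
    rw [hJ]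
    exact sup_le hq₁le (Ideal.map_le_iff_le_comap.mpr (hqcomap ▸ le_rfl))
  have hradle : J.radical ≤ 𝔮 := by
    have := Ideal.radical_mono hJle
    rwa [hqprime.radical] at this
  -- minimal prime of √J below 𝔮
  obtain ⟨𝔮₂, h2min, h2le⟩ := Ideal.exists_minimalPrimes_le hradle
  haveI h2prime : 𝔮₂.IsPrime := h2min.1.1
  have hradrad : (J.radical).radical = J.radical := Ideal.radical_idem J
  have h2diff : IsDiffIdeal dB 𝔮₂ := minimalPrime_diff hdB hradrad hJradd h2min
  refine ⟨𝔮₂, h2prime, h2diff, ?_, ?_⟩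
  · exact le_trans (le_trans le_sup_left (Ideal.le_radical)) h2min.1.2
  · apply le_antisymm
    · rw [← hqcomap]
      exact Ideal.comap_mono h2le
    · intro a ha
      have : f a ∈ Ideal.map f 𝔭₂ := Ideal.mem_map_of_mem f ha
      have : f a ∈ J := Ideal.mem_sup_right this
      exact h2min.1.2 (Ideal.le_radical this)
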